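/- For all nonnegative integers a, b, n with a + b ≤ n, the quantity Σ(n,a,b) := ∑_{j=1}^{b} (κ_{j+a−1} + κ_{n−j−a}) · (b − 1 + κ_{j−1} + κ_{b−j} − κ_b) is nonnegative: Σ(n,a,b) ≥ 0. -/
import Mathlib


open Finset Filter Topology

/-- The `n`-th harmonic number `H_n = ∑_{i=1}^n 1/i`. -/
noncomputable def H (n : ℕ) : ℝ := ∑ i ∈ Finset.range n, (1 : ℝ) / (i + 1)

/-- `κ_n = 2(n+1)H_n - 4n`, the mean number of key comparisons for QuickSort on `n` keys. -/
noncomputable def κ (n : ℕ) : ℝ := 2 * (n + 1) * H n - 4 * n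

lemma H_succ (n : ℕ) : H (n+1) = H n + 1/((n:ℝ)+1) := by
  simp [H, Finset.sum_range_succ]

lemma H_mono : Monotone H := by
  intro m n hmn
  apply Finset.sum_le_sum_of_subset_of_nonneg (by simpa using hmn)
  intros; positivity

lemma kappa_def (n : ℕ) : κ n = 2 * ((n:ℝ) + 1) * H n - 4 * n := rfl

lemma kappa_succ (n : ℕ) : κ (n+1) = κ n + 2 * H (n+1) - 2 := by
  have hb : ((n:ℝ)+1) ≠ 0 := by positivity
  rw [kappa_def, kappa_def, H_succ]
  push_cast
  field_simp
  ring

lemma kappa_step {s t : ℕ} (h : s ≤ t) : κ (s+1) + κ t ≤ κ s + κ (t+1) := by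
  rw [kappa_succ, kappa_succ]
  have := H_mono (Nat.succ_le_succ h)
  linarith

lemma kappa_shift (d s t : ℕ) (h : s ≤ t) : κ (s+d) + κ t ≤ κ s + κ (t+d) := by
  induction d with
  | zero => simp
  | succ d ih =>
    have h1 := kappa_step (show s + d ≤ t + d by omega)
    show κ (s+d+1) + κ t ≤ κ s + κ (t+d+1)
    linarith

lemma kappa_spread {s s' t t' : ℕ} (h1 : s ≤ s') (h2 : s' ≤ t') (h3 : s + t = s' + t') :
    κ s' + κ t' ≤ κ s + κ t := by
  obtain ⟨d, rfl⟩ := Nat.exists_eq_add_of_le h1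
  have ht : t = t' + d := by omega
  subst ht
  exact kappa_shift d s t' (by omega)

lemma sum_Icc_one (b : ℕ) (f : ℕ → ℝ) :
    ∑ j ∈ Finset.Icc 1 b, f j = ∑ i ∈ Finset.range b, f (i+1) := by
  rw [← Finset.Ico_add_one_right_eq_Icc, Finset.sum_Ico_eq_sum_range]
  simp [add_comm 1]

lemma sum_kappa (b : ℕ) :
    2 * ∑ k ∈ Finset.range b, κ k = b * κ b - b * ((b:ℝ) - 1) := by
  induction b with
  | zero => simp [κ, H]
  | succ b ih =>
    rw [Finset.sum_range_succ]
    have h1 : H (b+1) = H b + 1/((b:ℝ)+1) := H_succ b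
    have h2 := kappa_succ b
    have h3 := kappa_def b
    have hb : ((b:ℝ)+1) ≠ 0 := by positivity
    push_cast [h2, h1] at *
    field_simp at *
    nlinarith [ih, h3]

noncomputable def Gf (b j : ℕ) : ℝ := (b:ℝ) - 1 + κ (j-1) + κ (b-j) - κ b
noncomputable def Qf (a n j : ℕ) : ℝ := κ (j + a - 1) + κ (n - j - a)
noncomputable def Ff (a b n j : ℕ) : ℝ := (Qf a n j + Qf a n (b+1-j)) / 2

lemma sum_reflect (b : ℕ) (f : ℕ → ℝ) :
    ∑ j ∈ Finset.Icc 1 b, f (b+1-j) = ∑ j ∈ Finset.Icc 1 b, f j := by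
  rw [sum_Icc_one, sum_Icc_one, ← Finset.sum_range_reflect]
  apply Finset.sum_congr rfl
  intro i hi
  simp only [Finset.mem_range] at hi
  congr 1
  omega

lemma sum_G (b : ℕ) : ∑ j ∈ Finset.Icc 1 b, Gf b j = 0 := by
  have h1 : ∑ j ∈ Finset.Icc 1 b, κ (j-1) = ∑ k ∈ Finset.range b, κ k := by
    rw [sum_Icc_one]; simp
  have h2 : ∑ j ∈ Finset.Icc 1 b, κ (b-j) = ∑ k ∈ Finset.range b, κ k := by
    rw [sum_Icc_one, ← Finset.sum_range_reflect]
    apply Finset.sum_congr rfl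
    intro i hi
    simp only [Finset.mem_range] at hi
    congr 1
    omega
  have h3 := sum_kappa b
  have hc : (Finset.Icc 1 b).card = b := by simp
  simp only [Gf]
  have he : ∀ j : ℕ, (b:ℝ) - 1 + κ (j-1) + κ (b-j) - κ b = ((b:ℝ) - 1 - κ b) + κ (j-1) + κ (b-j) := fun j => by ring
  simp_rw [he, Finset.sum_add_distrib, h1, h2, Finset.sum_const, hc, nsmul_eq_mul]
  linarith

lemma G_symm (b j : ℕ) (h1 : 1 ≤ j) (h2 : j ≤ b) : Gf b (b+1-j) = Gf b j := by
  unfold Gf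
  rw [show b+1-j-1 = b-j by omega, show b-(b+1-j) = j-1 by omega]
  ring

lemma F_symm (a b n j : ℕ) (h2 : j ≤ b+1) : Ff a b n (b+1-j) = Ff a b n j := by
  unfold Ff
  rw [show b+1-(b+1-j) = j by omega]
  ring

lemma G_mono (b i j : ℕ) (hi1 : 1 ≤ i) (hij : i ≤ j) (hj : 2*j ≤ b+1) :
    Gf b j ≤ Gf b i := by
  unfold Gf
  have := kappa_spread (s := i-1) (s' := j-1) (t := b-i) (t' := b-j)
    (by omega) (by omega) (by omega)
  linarith

lemma F_mono (a b n i j : ℕ) (hab : a + b ≤ n) (hi1 : 1 ≤ i) (hij : i ≤ j) (hj : 2*j ≤ b+1) :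
    Ff a b n j ≤ Ff a b n i := by
  have hjb : j ≤ b := by omega
  unfold Ff Qf
  have e1 : b+1-i+a-1 = b-i+a := by omega
  have e2 : b+1-j+a-1 = b-j+a := by omega
  have e3 : n-(b+1-i)-a = n+i-b-1-a := by omega
  have e4 : n-(b+1-j)-a = n+j-b-1-a := by omega
  rw [e1, e2, e3, e4]
  have hA := kappa_spread (s := i+a-1) (s' := j+a-1) (t := b-i+a) (t' := b-j+a)
    (by omega) (by omega) (by omega)
  have hB := kappa_spread (s := n+i-b-1-a) (s' := n+j-b-1-a) (t := n-i-a) (t' := n-j-a)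
    (by omega) (by omega) (by omega)
  linarith

lemma monovary (a b n : ℕ) (hab : a + b ≤ n) :
    MonovaryOn (Ff a b n) (Gf b) (Finset.Icc 1 b : Finset ℕ) := by
  intro i hi j hj hGij
  simp only [Finset.coe_Icc, Set.mem_Icc] at hi hj
  set i' := if 2*i ≤ b+1 then i else b+1-i with hi'
  set j' := if 2*j ≤ b+1 then j else b+1-j with hj'
  have hFi : Ff a b n i' = Ff a b n i := by
    rw [hi']; split
    · rfl
    · exact F_symm a b n i (by omega)
  have hFj : Ff a b n j' = Ff a b n j := by
    rw [hj']; split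
    · rfl
    · exact F_symm a b n j (by omega)
  have hGi : Gf b i' = Gf b i := by
    rw [hi']; split
    · rfl
    · exact G_symm b i (by omega) (by omega)
  have hGj : Gf b j' = Gf b j := by
    rw [hj']; split
    · rfl
    · exact G_symm b j (by omega) (by omega)
  have hi'1 : 1 ≤ i' := by rw [hi']; split <;> omega
  have hj'1 : 1 ≤ j' := by rw [hj']; split <;> omega
  have hi'h : 2*i' ≤ b+1 := by rw [hi']; split <;> omega
  have hj'h : 2*j' ≤ b+1 := by rw [hj']; split <;> omega
  rcases le_or_gt i' j' with hle | hlt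
  · have := G_mono b i' j' hi'1 hle hj'h
    rw [hGi, hGj] at this
    exact absurd hGij (not_lt.2 this)
  · have := F_mono a b n j' i' hab hj'1 (le_of_lt hlt) hi'h
    rw [hFi, hFj] at this
    exact this

theorem sigma_nonneg (a b n : ℕ) (h : a + b ≤ n) :
    0 ≤ ∑ j ∈ Finset.Icc 1 b,
      (κ (j + a - 1) + κ (n - j - a)) *
        ((b : ℝ) - 1 + κ (j - 1) + κ (b - j) - κ b) := by
  rcases Nat.eq_zero_or_pos b with hb | hb
  · subst hb; simp
  show 0 ≤ ∑ j ∈ Finset.Icc 1 b, Qf a n j * Gf b j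
  have hB : ∑ j ∈ Finset.Icc 1 b, Qf a n (b+1-j) * Gf b j
      = ∑ j ∈ Finset.Icc 1 b, Qf a n j * Gf b j := by
    have h1 : ∑ j ∈ Finset.Icc 1 b, Qf a n (b+1-j) * Gf b j
        = ∑ j ∈ Finset.Icc 1 b, Qf a n (b+1-j) * Gf b (b+1-j) := by
      apply Finset.sum_congr rfl
      intro j hj
      simp only [Finset.mem_Icc] at hj
      rw [G_symm b j hj.1 hj.2]
    rw [h1]
    exact sum_reflect b (fun j => Qf a n j * Gf b j)
  have hFQ : ∑ j ∈ Finset.Icc 1 b, Ff a b n j * Gf b j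
      = ∑ j ∈ Finset.Icc 1 b, Qf a n j * Gf b j := by
    unfold Ff
    rw [show (∑ j ∈ Finset.Icc 1 b, (Qf a n j + Qf a n (b+1-j))/2 * Gf b j)
        = (∑ j ∈ Finset.Icc 1 b, Qf a n j * Gf b j
          + ∑ j ∈ Finset.Icc 1 b, Qf a n (b+1-j) * Gf b j) / 2 by
      rw [← Finset.sum_add_distrib, Finset.sum_div]
      apply Finset.sum_congr rfl; intros; ring]
    rw [hB]; ring
  have hcheb := (monovary a b n h).sum_mul_sum_le_card_mul_sum
  rw [sum_G b, mul_zero, hFQ] at hcheb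
  have hcard : ((Finset.Icc 1 b).card : ℝ) = b := by simp
  rw [hcard] at hcheb
  have hbpos : (0:ℝ) < b := by exact_mod_cast hb
  nlinarith
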